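/- Let k be a nonarchimedean local field with ring of integers O and v the normalized valuation, and let q be a trace-zero element of M₂(k) with q² = a·I where a ∈ O^* is a unit. Then the depth p of O[q] satisfies p ≤ v(2), with equality if and only if k(q) is isomorphic to k × k or to the unramified quadratic extension of k. -/

import Mathlib

section Aux

variable {O : Type*} [CommRing O] [IsDomain O] [IsDiscreteValuationRing O]

/-- In a DVR, a non-unit is divisible by any irreducible. -/
lemma aux_nonunit_dvd {π b : O} (hπ : Irreducible π) (hb : ¬ IsUnit b) : π ∣ b := by
  rcases eq_or_ne b 0 with rfl | hb0
  · exact dvd_zero π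
  obtain ⟨n, u, hu⟩ := IsDiscreteValuationRing.eq_unit_mul_pow_irreducible hb0 hπ
  rcases Nat.eq_zero_or_pos n with hn | hn
  · exact absurd (hu ▸ (by simp [hn] : IsUnit ((u : O) * π ^ n))) hb
  · exact hu ▸ Dvd.dvd.mul_left (dvd_pow_self π hn.ne') _

/-- In a DVR, if `π^(n+1) ∤ b` then `b ∣ π^n`. -/
lemma aux_dvd_pow {π b : O} (hπ : Irreducible π) {n : ℕ} (hb : ¬ π ^ (n + 1) ∣ b) :
    b ∣ π ^ n := by
  have hb0 : b ≠ 0 := by rintro rfl; exact hb (dvd_zero _)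
  obtain ⟨m, u, hu⟩ := IsDiscreteValuationRing.eq_unit_mul_pow_irreducible hb0 hπ
  have hm : m ≤ n := by
    by_contra hmn
    exact hb (hu ▸ Dvd.dvd.mul_left (pow_dvd_pow π (by omega)) _)
  refine ⟨(↑u⁻¹ : O) * π ^ (n - m), ?_⟩
  rw [hu]
  have : (u : O) * ((↑u⁻¹ : O)) = 1 := by
    exact_mod_cast Units.mul_inv u
  calc π ^ n = 1 * (π ^ m * π ^ (n - m)) := by
        rw [one_mul, ← pow_add]; congr 1; omega
    _ = (u : O) * π ^ m * ((↑u⁻¹ : O) * π ^ (n - m)) := by rw [← this]; ring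

/-- Square roots of units lift from `K` to the DVR. -/
lemma aux_sq_lift {K : Type*} [Field K] [Algebra O K] [IsFractionRing O K]
    {a : O} {r : K} (hr : algebraMap O K a = r * r) : ∃ w : O, w * w = a := by
  have hint : IsIntegral O r := by
    refine ⟨Polynomial.X ^ 2 - Polynomial.C a, ?_, ?_⟩
    · have : (Polynomial.X ^ 2 - Polynomial.C a : Polynomial O)
          = Polynomial.X ^ 2 + (-Polynomial.C a) := by ring
      rw [this]
      refine (Polynomial.monic_X_pow 2).add_of_left ?_
      refine lt_of_le_of_lt (Polynomial.degree_neg (Polynomial.C a) ▸ Polynomial.degree_C_le) ?_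
      rw [Polynomial.degree_X_pow]
      norm_num
    · simp [Polynomial.eval₂_sub, ← hr, sq]
  obtain ⟨w, hw⟩ := IsIntegrallyClosed.isIntegral_iff.mp hint
  refine ⟨w, IsFractionRing.injective O K ?_⟩
  rw [map_mul, hw, ← hr]

end Aux

/-- For a pure quaternion `q ∈ M₂(k)` with `q² = a·I`, `a` a unit, the depth `p` of `O[q]`
satisfies `p ≤ v(2)`, with equality iff `k(q) ≅ k × k` (i.e. `a` is a square in `k`) or
`k(q)/k` is the unramified quadratic extension (i.e. `a` has quadratic defect `(4)`). -/
theorem stmt_11 (O : Type*) [CommRing O] [IsDomain O] [IsDiscreteValuationRing O]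
    [IsAdicComplete (IsLocalRing.maximalIdeal O) O] [Finite (IsLocalRing.ResidueField O)]
    (K : Type*) [Field K] [Algebra O K] [IsFractionRing O K]
    (π : O) (hπ : Irreducible π)
    (e : ℕ) (he : ∃ ν : O, IsUnit ν ∧ (2 : O) = ν * π ^ e)
    (q : Matrix (Fin 2) (Fin 2) K) (htr : Matrix.trace q = 0)
    (a : O) (ha : IsUnit a)
    (hq2 : q * q = algebraMap O K a • (1 : Matrix (Fin 2) (Fin 2) K)) :
    (∀ p ∈ {p : ℕ | ∃ c : O,
      Matrix.trace (((algebraMap O K π) ^ p)⁻¹ •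
          (q - algebraMap O K c • (1 : Matrix (Fin 2) (Fin 2) K))) ∈
        Set.range (algebraMap O K) ∧
      Matrix.det (((algebraMap O K π) ^ p)⁻¹ •
          (q - algebraMap O K c • (1 : Matrix (Fin 2) (Fin 2) K))) ∈
        Set.range (algebraMap O K)}, p ≤ e) ∧
    ((e ∈ {p : ℕ | ∃ c : O,
      Matrix.trace (((algebraMap O K π) ^ p)⁻¹ •
          (q - algebraMap O K c • (1 : Matrix (Fin 2) (Fin 2) K))) ∈
        Set.range (algebraMap O K) ∧
      Matrix.det (((algebraMap O K π) ^ p)⁻¹ •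
          (q - algebraMap O K c • (1 : Matrix (Fin 2) (Fin 2) K))) ∈
        Set.range (algebraMap O K)}) ↔
      (IsSquare (algebraMap O K a) ∨
        (⨅ x : O, Ideal.span {a - x ^ 2}) = Ideal.span {(2 : O) ^ 2})) := by
  classical
  obtain ⟨ν, hν, h2⟩ := he
  set A := algebraMap O K with hA
  have hinj : Function.Injective A := IsFractionRing.injective O K
  have hπ0 : π ≠ 0 := hπ.ne_zero
  have hAπ0 : A π ≠ 0 := fun h => hπ0 (hinj (by rwa [map_zero]))
  have hπp : Prime π := UniqueFactorizationMonoid.irreducible_iff_prime.mp hπ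
  have hπna : ¬ π ∣ a := fun h => hπ.not_isUnit (isUnit_of_dvd_unit h ha)
  -- entries of q
  have htr2 : q 1 1 = - q 0 0 := by
    have h := Matrix.trace_fin_two q
    rw [htr] at h
    linear_combination -h
  have hxyz : q 0 0 * q 0 0 + q 0 1 * q 1 0 = A a := by
    have h00 := congrFun (congrFun hq2 0) 0
    simpa [Matrix.mul_apply, Fin.sum_univ_two, Matrix.smul_apply, Matrix.one_apply] using h00
  -- membership criterion
  have hmem : ∀ (n : ℕ) (s : O), ((A π) ^ n)⁻¹ * A s ∈ Set.range A ↔ π ^ n ∣ s := by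
    intro n s
    constructor
    · rintro ⟨o, ho⟩
      refine ⟨o, hinj ?_⟩
      rw [map_mul, map_pow]
      field_simp at ho
      rw [← ho]
      ring
    · rintro ⟨o, rfl⟩
      refine ⟨o, ?_⟩
      rw [map_mul, map_pow]
      field_simp
  have htr_eq : ∀ (p : ℕ) (c : O),
      Matrix.trace (((A π) ^ p)⁻¹ • (q - A c • (1 : Matrix (Fin 2) (Fin 2) K)))
        = ((A π) ^ p)⁻¹ * A (-(2 * c)) := by
    intro p c
    have h := Matrix.trace_fin_two q
    rw [htr] at h
    simp only [Matrix.trace_fin_two, Matrix.smul_apply, Matrix.sub_apply, Matrix.one_apply_eq,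
      smul_eq_mul, map_neg, map_mul, map_ofNat]
    rw [htr2]
    ring
  have hdet_eq : ∀ (p : ℕ) (c : O),
      Matrix.det (((A π) ^ p)⁻¹ • (q - A c • (1 : Matrix (Fin 2) (Fin 2) K)))
        = ((A π) ^ (2 * p))⁻¹ * A (c ^ 2 - a) := by
    intro p c
    rw [Matrix.det_fin_two]
    simp only [Matrix.smul_apply, Matrix.sub_apply, Matrix.one_apply_eq, Matrix.one_apply_ne
      (by decide : (0 : Fin 2) ≠ 1), Matrix.one_apply_ne (by decide : (1 : Fin 2) ≠ 0),
      smul_eq_mul, map_sub, map_pow]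
    rw [htr2, ← hxyz]
    have h2p : ((A π) ^ (2 * p))⁻¹ = ((A π) ^ p)⁻¹ * ((A π) ^ p)⁻¹ := by
      rw [← mul_inv, ← pow_add, two_mul]
    rw [h2p]
    ring
  have hcond : ∀ p : ℕ,
      (p ∈ {p : ℕ | ∃ c : O,
        Matrix.trace (((A π) ^ p)⁻¹ • (q - A c • (1 : Matrix (Fin 2) (Fin 2) K))) ∈
          Set.range A ∧
        Matrix.det (((A π) ^ p)⁻¹ • (q - A c • (1 : Matrix (Fin 2) (Fin 2) K))) ∈
          Set.range A}) ↔ ∃ c : O, π ^ p ∣ 2 * c ∧ π ^ (2 * p) ∣ c ^ 2 - a := by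
    intro p
    simp only [Set.mem_setOf_eq]
    refine exists_congr fun c => ?_
    rw [htr_eq p c, hdet_eq p c, hmem, hmem, dvd_neg]
  constructor
  · -- depth bound
    intro p hp
    rw [hcond] at hp
    obtain ⟨c, h1, hdet⟩ := hp
    by_contra hle
    push_neg at hle
    -- π ∣ c
    have hπc : π ∣ c := by
      rw [h2] at h1
      have hfac : π ^ p = π ^ e * π ^ (p - e) := by rw [← pow_add]; congr 1; omega
      have h1' : π ^ e * π ^ (p - e) ∣ π ^ e * (ν * c) := by
        rw [← hfac]; convert h1 using 1; ring
      have := (mul_dvd_mul_iff_left (a := π ^ e) (pow_ne_zero e hπ0)).mp h1'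
      have hπd : π ∣ ν * c := dvd_trans (dvd_pow_self π (by omega : p - e ≠ 0)) this
      rcases hπp.dvd_mul.mp hπd with h | h
      · exact absurd (isUnit_of_dvd_unit h hν) hπ.not_isUnit
      · exact h
    have h2p : π ∣ c ^ 2 - a := dvd_trans (dvd_pow_self π (by omega : 2 * p ≠ 0)) hdet
    have : π ∣ a := by
      have : π ∣ c ^ 2 := dvd_pow hπc (by norm_num)
      have := dvd_sub this h2p
      simpa using this
    exact hπna this
  · rw [hcond]
    have hassoc : Associated (π ^ (2 * e)) ((2 : O) ^ 2) := by
      refine ⟨hν.unit ^ 2, ?_⟩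
      rw [h2]
      push_cast [IsUnit.unit_spec]
      ring
    have hspan4 : Ideal.span {(2 : O) ^ 2} = Ideal.span {π ^ (2 * e)} :=
      (Ideal.span_singleton_eq_span_singleton.mpr hassoc).symm
    constructor
    · rintro ⟨c, -, hc⟩
      -- hc : π ^ (2 * e) ∣ c ^ 2 - a
      by_cases hex : ∃ c' : O, π ^ (2 * e + 1) ∣ a - c' ^ 2
      · -- local square theorem: a is a square
        left
        obtain ⟨c', hc'⟩ := hex
        have hc'u : IsUnit c' := by
          by_contra hcu
          have h1 : π ∣ c' := aux_nonunit_dvd hπ hcu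
          have h3 : π ∣ a - c' ^ 2 := dvd_trans (dvd_pow_self π (by omega)) hc'
          have : π ∣ a := by
            have h4 : π ∣ c' ^ 2 := dvd_pow h1 (by norm_num)
            have := dvd_add h3 h4
            simpa using this
          exact hπna this
        obtain ⟨t, ht⟩ := hc'
        set s : O := (↑hν.unit⁻¹ : O) ^ 2 * (↑hc'u.unit⁻¹ : O) ^ 2 * π * t with hs
        have hkey : 4 * c' ^ 2 * s = a - c' ^ 2 := by
          rw [hs, ht]
          have h4 : (4 : O) = ν ^ 2 * π ^ (2 * e) := by
            have : (4 : O) = 2 * 2 := by norm_num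
            rw [this, h2]; ring
          rw [h4]
          have hu1 : ν * (↑hν.unit⁻¹ : O) = 1 := hν.mul_val_inv
          have hu2 : c' * (↑hc'u.unit⁻¹ : O) = 1 := hc'u.mul_val_inv
          calc ν ^ 2 * π ^ (2 * e) * c' ^ 2 *
                ((↑hν.unit⁻¹ : O) ^ 2 * (↑hc'u.unit⁻¹ : O) ^ 2 * π * t)
              = (ν * (↑hν.unit⁻¹ : O)) ^ 2 * (c' * (↑hc'u.unit⁻¹ : O)) ^ 2 *
                (π ^ (2 * e) * π * t) := by ring
            _ = π ^ (2 * e + 1) * t := by rw [hu1, hu2]; ring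
        have hsm : -s ∈ IsLocalRing.maximalIdeal O := by
          rw [IsLocalRing.mem_maximalIdeal]
          intro hsu
          have : π ∣ -s := ⟨-((↑hν.unit⁻¹ : O) ^ 2 * (↑hc'u.unit⁻¹ : O) ^ 2 * t), by
            rw [hs]; ring⟩
          exact hπ.not_isUnit (isUnit_of_dvd_unit this hsu)
        obtain ⟨z, hz, -⟩ := HenselianRing.is_henselian (I := IsLocalRing.maximalIdeal O)
          (Polynomial.X ^ 2 + Polynomial.X - Polynomial.C s)
          (by
            have : (Polynomial.X ^ 2 + Polynomial.X - Polynomial.C s : Polynomial O)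
                = Polynomial.X ^ 2 + (Polynomial.X - Polynomial.C s) := by ring
            rw [this]
            refine (Polynomial.monic_X_pow 2).add_of_left ?_
            rw [Polynomial.degree_X_pow]
            refine lt_of_le_of_lt (Polynomial.degree_sub_le _ _) ?_
            rw [Polynomial.degree_X]
            refine max_lt ?_ (lt_of_le_of_lt Polynomial.degree_C_le ?_) <;> decide)
          0 (by simpa using hsm)
          (by simp)
        have hz' : z ^ 2 + z = s := by
          have := hz
          simp only [Polynomial.IsRoot, Polynomial.eval_sub, Polynomial.eval_add,
            Polynomial.eval_pow, Polynomial.eval_X, Polynomial.eval_C] at this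
          linear_combination this
        refine ⟨A (c' * (1 + 2 * z)), ?_⟩
        rw [← map_mul]
        congr 1
        have : c' * (1 + 2 * z) * (c' * (1 + 2 * z)) = c' ^ 2 + 4 * c' ^ 2 * (z ^ 2 + z) := by
          ring
        rw [this, hz', hkey]
        ring
      · -- quadratic defect is (4)
        right
        push_neg at hex
        rw [hspan4]
        refine le_antisymm ?_ ?_
        · refine le_trans (iInf_le _ c) ?_
          rw [Ideal.span_singleton_le_span_singleton]
          exact dvd_sub_comm.mp hc
        · refine le_iInf fun x => ?_
          rw [Ideal.span_singleton_le_span_singleton]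
          exact aux_dvd_pow hπ (hex x)
    · rintro (⟨r, hr⟩ | hdef)
      · obtain ⟨w, hw⟩ := aux_sq_lift (O := O) (K := K) hr
        refine ⟨w, ⟨ν * w, by rw [h2]; ring⟩, ?_⟩
        have : w ^ 2 - a = 0 := by rw [sq, hw]; ring
        rw [this]
        exact dvd_zero _
      · rw [hspan4] at hdef
        by_contra hno
        push_neg at hno
        have hno' : ∀ x : O, ¬ π ^ (2 * e) ∣ x ^ 2 - a := fun x =>
          hno x ⟨ν * x, by rw [h2]; ring⟩
        rcases Nat.eq_zero_or_pos e with he0 | he0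
        · exact hno' 0 (by simp [he0])
        obtain ⟨m, hm⟩ : ∃ m, 2 * e = m + 1 := ⟨2 * e - 1, by omega⟩
        have hle : Ideal.span {π ^ m} ≤ Ideal.span {π ^ (2 * e)} := by
          rw [← hdef]
          refine le_iInf fun x => ?_
          rw [Ideal.span_singleton_le_span_singleton]
          refine aux_dvd_pow hπ ?_
          rw [← hm]
          intro hd
          exact hno' x (dvd_sub_comm.mp hd)
        rw [Ideal.span_singleton_le_span_singleton] at hle
        obtain ⟨d, hd⟩ := hle
        have hfac : π ^ m * 1 = π ^ m * (π * d) :=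
          calc π ^ m * 1 = π ^ m := mul_one _
            _ = π ^ (2 * e) * d := hd
            _ = π ^ m * (π * d) := by rw [hm, pow_succ]; ring
        have := mul_left_cancel₀ (pow_ne_zero _ hπ0) hfac
        exact hπ.not_isUnit (IsUnit.of_mul_eq_one d this.symm)
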